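/- arXiv:1902.09194 — 2 statements merged into one kernel-verified Lean document; each statement's English description precedes it below -/
import Mathlib

section
/- Let w : Fin 3 → ℝ with each w i equal to 1 or −1, let Q be the diagonal quadratic form on Fin 3 → ℝ with weights w, let A = CliffordAlgebra Q, and let conj : A → A denote Clifford conjugation (reversal composed with grade involution). Let a, b, c ∈ A and set d' := b^2 + (conj a)·a + b·(a + conj a). If d' is a unit of A, then x := ((conj a)·c + c·b)·d'⁻¹ (using the inverse of the unit d') satisfies the Sylvester equation a·x + x·b = c. -/
/-- Clifford conjugation: reversal composed with grade involution. -/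
noncomputable def cliffordConj {n : ℕ} (w : Fin n → ℝ) :
    CliffordAlgebra (QuadraticMap.weightedSumSquares ℝ w) →
      CliffordAlgebra (QuadraticMap.weightedSumSquares ℝ w) :=
  fun a => CliffordAlgebra.reverse (CliffordAlgebra.involute a)

namespace Cliff3
open CliffordAlgebra

variable (w : Fin 3 → ℝ)

noncomputable def e (i : Fin 3) :
    CliffordAlgebra (QuadraticMap.weightedSumSquares ℝ w) :=
  ι _ (Pi.single i 1)

variable {w}

theorem e_sq (i : Fin 3) :
    e w i * e w i = algebraMap ℝ _ (w i) := by
  rw [e, ι_sq_scalar]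
  congr 1
  simp [Pi.single_apply, Fin.sum_univ_three]

theorem isOrtho_single {i j : Fin 3} (h : i ≠ j) :
    (QuadraticMap.weightedSumSquares ℝ w).IsOrtho (Pi.single i 1) (Pi.single j 1) := by
  rw [QuadraticMap.isOrtho_def]
  simp [Pi.single_apply, Fin.sum_univ_three]
  fin_cases i <;> fin_cases j <;> simp_all <;> ring

theorem e_anti {i j : Fin 3} (h : i ≠ j) :
    e w i * e w j = -(e w j * e w i) :=
  ι_mul_ι_comm_of_isOrtho (isOrtho_single h)


theorem e_swap' {i j : Fin 3} (h : i ≠ j) (z : CliffordAlgebra (QuadraticMap.weightedSumSquares ℝ w)) :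
    e w i * (e w j * z) = -(e w j * (e w i * z)) := by
  rw [← mul_assoc, e_anti h, neg_mul, mul_assoc]

theorem e_sq' (i : Fin 3) (z : CliffordAlgebra (QuadraticMap.weightedSumSquares ℝ w)) :
    e w i * (e w i * z) = w i • z := by
  rw [← mul_assoc, e_sq, Algebra.algebraMap_eq_smul_one, smul_mul_assoc, one_mul]

theorem e_sq_smul (i : Fin 3) : e w i * e w i = w i • (1 : CliffordAlgebra (QuadraticMap.weightedSumSquares ℝ w)) := by
  rw [e_sq, Algebra.algebraMap_eq_smul_one]

theorem s10 (z) : e w 1 * (e w 0 * z) = -(e w 0 * (e w 1 * z)) := e_swap' (by decide) z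
theorem s20 (z) : e w 2 * (e w 0 * z) = -(e w 0 * (e w 2 * z)) := e_swap' (by decide) z
theorem s21 (z) : e w 2 * (e w 1 * z) = -(e w 1 * (e w 2 * z)) := e_swap' (by decide) z
theorem a10 : e w 1 * e w 0 = -(e w 0 * e w 1) := e_anti (by decide)
theorem a20 : e w 2 * e w 0 = -(e w 0 * e w 2) := e_anti (by decide)
theorem a21 : e w 2 * e w 1 = -(e w 1 * e w 2) := e_anti (by decide)

variable (w)

noncomputable def M : Submodule ℝ (CliffordAlgebra (QuadraticMap.weightedSumSquares ℝ w)) :=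
  Submodule.span ℝ {1, e w 0, e w 1, e w 2, e w 0 * e w 1, e w 0 * e w 2, e w 1 * e w 2,
    e w 0 * (e w 1 * e w 2)}

variable {w}

theorem one_mem_M : (1 : CliffordAlgebra (QuadraticMap.weightedSumSquares ℝ w)) ∈ M w :=
  Submodule.subset_span (by simp)

set_option maxHeartbeats 1600000 in
theorem mul_e_mem (i : Fin 3) (x) (hx : x ∈ M w) : x * e w i ∈ M w := by
  induction hx using Submodule.span_induction with
  | mem x hx =>
    have h3 : i = 0 ∨ i = 1 ∨ i = 2 := by omega
    rcases h3 with rfl | rfl | rfl <;> simp only [Set.mem_insert_iff, Set.mem_singleton_iff] at hx <;>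
      rcases hx with rfl | rfl | rfl | rfl | rfl | rfl | rfl | rfl <;>
      (try simp only [Fin.isValue, one_mul, mul_assoc, s10, s20, s21, a10, a20, a21, e_sq',
        e_sq_smul, mul_neg, neg_neg, mul_smul_comm, smul_neg, mul_one]) <;>
      (repeat first | apply Submodule.neg_mem | apply Submodule.smul_mem) <;>
      exact Submodule.subset_span (by simp)
  | zero => simp [Submodule.zero_mem]
  | add x y _ _ hx hy => rw [add_mul]; exact Submodule.add_mem _ hx hy
  | smul r x _ hx => rw [smul_mul_assoc]; exact Submodule.smul_mem _ _ hx

theorem ι_expand (v : Fin 3 → ℝ) :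
    ι (QuadraticMap.weightedSumSquares ℝ w) v = v 0 • e w 0 + v 1 • e w 1 + v 2 • e w 2 := by
  have hv : v = v 0 • (Pi.single 0 1 : Fin 3 → ℝ) + v 1 • (Pi.single 1 1 : Fin 3 → ℝ) + v 2 • (Pi.single 2 1 : Fin 3 → ℝ) := by
    funext j; fin_cases j <;> simp [Pi.single_apply]
  conv_lhs => rw [hv]
  simp [e]

theorem M_top (x : CliffordAlgebra (QuadraticMap.weightedSumSquares ℝ w)) : x ∈ M w := by
  have key : ∀ y x : CliffordAlgebra (QuadraticMap.weightedSumSquares ℝ w),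
      x ∈ M w → x * y ∈ M w := by
    intro y
    induction y using CliffordAlgebra.induction with
    | algebraMap r =>
      intro x hx
      rw [← Algebra.commutes, ← Algebra.smul_def]
      exact Submodule.smul_mem _ _ hx
    | ι v =>
      intro x hx
      rw [ι_expand, mul_add, mul_add, mul_smul_comm, mul_smul_comm, mul_smul_comm]
      exact Submodule.add_mem _ (Submodule.add_mem _
        (Submodule.smul_mem _ _ (mul_e_mem 0 x hx)) (Submodule.smul_mem _ _ (mul_e_mem 1 x hx)))
        (Submodule.smul_mem _ _ (mul_e_mem 2 x hx))
    | mul y z hy hz => intro x hx; rw [← mul_assoc]; exact hz _ (hy _ hx)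
    | add y z hy hz => intro x hx; rw [mul_add]; exact Submodule.add_mem _ (hy _ hx) (hz _ hx)
  simpa using key x 1 one_mem_M


variable (w)

noncomputable def cj (x : CliffordAlgebra (QuadraticMap.weightedSumSquares ℝ w)) :
    CliffordAlgebra (QuadraticMap.weightedSumSquares ℝ w) :=
  reverse (involute x)

variable {w}

theorem cj_add (x y) : cj w (x + y) = cj w x + cj w y := by simp [cj]
theorem cj_smul (r : ℝ) (x) : cj w (r • x) = r • cj w x := by simp [cj]
theorem cj_zero : cj w 0 = 0 := by simp [cj]
theorem cj_one : cj w 1 = 1 := by simp [cj]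
theorem cj_mul (x y) : cj w (x * y) = cj w y * cj w x := by
  simp [cj, map_mul, reverse.map_mul]
theorem cj_e (i : Fin 3) : cj w (e w i) = -(e w i) := by
  simp [cj, e, involute_ι, reverse_ι]
theorem cj_cj (x) : cj w (cj w x) = x := by
  simp only [cj]
  rw [← reverse_involute, reverse_reverse, involute_involute]

theorem comm_of_comm_e {z : CliffordAlgebra (QuadraticMap.weightedSumSquares ℝ w)}
    (h : ∀ i, z * e w i = e w i * z) (y) : z * y = y * z := by
  induction y using CliffordAlgebra.induction with
  | algebraMap r => exact (Algebra.commutes r z).symm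
  | ι v =>
    rw [ι_expand, mul_add, mul_add, add_mul, add_mul, mul_smul_comm, mul_smul_comm,
      mul_smul_comm, smul_mul_assoc, smul_mul_assoc, smul_mul_assoc, h 0, h 1, h 2]
  | mul a b ha hb => rw [← mul_assoc, ha, mul_assoc, hb, ← mul_assoc]
  | add a b ha hb => rw [mul_add, add_mul, ha, hb]

theorem pseudo_comm (i : Fin 3) :
    (e w 0 * (e w 1 * e w 2)) * e w i = e w i * (e w 0 * (e w 1 * e w 2)) := by
  have h3 : i = 0 ∨ i = 1 ∨ i = 2 := by omega
  rcases h3 with rfl | rfl | rfl <;>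
    simp only [mul_assoc, s10, s20, s21, a10, a20, a21, e_sq', e_sq_smul, mul_neg, neg_neg,
      mul_smul_comm, smul_neg, mul_one]

theorem central_add_cj (x y : CliffordAlgebra (QuadraticMap.weightedSumSquares ℝ w)) :
    (x + cj w x) * y = y * (x + cj w x) := by
  induction M_top x using Submodule.span_induction with
  | mem x hx =>
    simp only [Set.mem_insert_iff, Set.mem_singleton_iff] at hx
    have hcomm : ∀ z : CliffordAlgebra (QuadraticMap.weightedSumSquares ℝ w),
        (∀ t, z * t = t * z) → (z + z) * y = y * (z + z) := by
      intro z hz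
      rw [add_mul, mul_add, hz y]
    rcases hx with rfl | rfl | rfl | rfl | rfl | rfl | rfl | rfl
    · rw [cj_one]
      simp [add_mul, mul_add]
    · rw [cj_e]; simp
    · rw [cj_e]; simp
    · rw [cj_e]; simp
    · rw [cj_mul, cj_e, cj_e, neg_mul_neg, a10]; simp
    · rw [cj_mul, cj_e, cj_e, neg_mul_neg, a20]; simp
    · rw [cj_mul, cj_e, cj_e, neg_mul_neg, a21]; simp
    · have hp : cj w (e w 0 * (e w 1 * e w 2)) = e w 0 * (e w 1 * e w 2) := by
        rw [cj_mul, cj_mul, cj_e, cj_e, cj_e]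
        simp only [mul_assoc, neg_mul, mul_neg, neg_neg, s10, s20, s21, a10, a20, a21]
      rw [hp]
      exact hcomm _ (fun t => comm_of_comm_e pseudo_comm t)
  | zero => rw [cj_zero]; simp
  | add p q _ _ hp hq =>
    rw [cj_add, show p + q + (cj w p + cj w q) = (p + cj w p) + (q + cj w q) by abel,
      add_mul, mul_add, hp, hq]
  | smul r p _ hp =>
    rw [cj_smul, ← smul_add, smul_mul_assoc, mul_smul_comm, hp]

theorem central_cj_mul (x y : CliffordAlgebra (QuadraticMap.weightedSumSquares ℝ w)) :
    (cj w x * x) * y = y * (cj w x * x) := by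
  set n := cj w x * x with hn
  have hcn : cj w n = n := by rw [hn, cj_mul, cj_cj]
  have h := central_add_cj n y
  rw [hcn, add_mul, mul_add] at h
  have h2 : (2 : ℝ) • (n * y) = (2 : ℝ) • (y * n) := by
    rw [two_smul, two_smul]; exact h
  have h3 := congrArg (fun t => (2 : ℝ)⁻¹ • t) h2
  simpa [smul_smul] using h3

end Cliff3

theorem clifford3_sylvester_right_solution (w : Fin 3 → ℝ)
    (hw : ∀ i, w i = 1 ∨ w i = -1)
    (a b c : CliffordAlgebra (QuadraticMap.weightedSumSquares ℝ w))
    (hd : IsUnit (b ^ 2 + cliffordConj w a * a + b * (a + cliffordConj w a))) :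
    a * ((cliffordConj w a * c + c * b) * ↑hd.unit⁻¹) +
      ((cliffordConj w a * c + c * b) * ↑hd.unit⁻¹) * b = c := by
  have hs : ∀ y, (a + cliffordConj w a) * y = y * (a + cliffordConj w a) := fun y =>
    Cliff3.central_add_cj a y
  have hn : ∀ y, (cliffordConj w a * a) * y = y * (cliffordConj w a * a) := fun y =>
    Cliff3.central_cj_mul a y
  have hu : (hd.unit : CliffordAlgebra (QuadraticMap.weightedSumSquares ℝ w)) =
      b ^ 2 + cliffordConj w a * a + b * (a + cliffordConj w a) := hd.unit_spec
  have hbd : Commute b (b ^ 2 + cliffordConj w a * a + b * (a + cliffordConj w a)) := by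
    have h1 : Commute b (b ^ 2) := (Commute.refl b).pow_right 2
    have h2 : Commute b (cliffordConj w a * a) := (hn b).symm
    have h3 : Commute b (b * (a + cliffordConj w a)) := by
      show b * (b * (a + cliffordConj w a)) = b * (a + cliffordConj w a) * b
      rw [mul_assoc, ← hs b]
    exact (h1.add_right h2).add_right h3
  have hbu : Commute b (hd.unit : CliffordAlgebra (QuadraticMap.weightedSumSquares ℝ w)) := by
    rw [hu]; exact hbd
  have hbinv : Commute b (↑hd.unit⁻¹ : CliffordAlgebra (QuadraticMap.weightedSumSquares ℝ w)) :=
    hbu.units_inv_right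
  have haconj : a * cliffordConj w a = cliffordConj w a * a := by
    have h := hs a
    rw [add_mul, mul_add] at h
    exact (add_left_cancel h).symm
  have hkey : a * (cliffordConj w a * c + c * b) + (cliffordConj w a * c + c * b) * b =
      c * ↑hd.unit := by
    rw [hu, mul_add, add_mul]
    have h1 : a * (cliffordConj w a * c) = c * (cliffordConj w a * a) := by
      rw [← mul_assoc, haconj, hn c]
    have h2 : a * (c * b) + cliffordConj w a * c * b = c * (b * (a + cliffordConj w a)) := by
      rw [mul_assoc (cliffordConj w a), ← add_mul, hs (c * b), mul_assoc]
    have h3 : c * b * b = c * b ^ 2 := by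
      rw [pow_succ, pow_succ, pow_zero, one_mul, mul_assoc]
    calc a * (cliffordConj w a * c) + a * (c * b) + (cliffordConj w a * c * b + c * b * b)
        = a * (cliffordConj w a * c) + (a * (c * b) + cliffordConj w a * c * b) + c * b * b := by
          abel
      _ = c * (cliffordConj w a * a) + c * (b * (a + cliffordConj w a)) + c * b ^ 2 := by
          rw [h1, h2, h3]
      _ = c * (b ^ 2 + cliffordConj w a * a + b * (a + cliffordConj w a)) := by
          simp only [mul_add]; abel
  have hswap : ((cliffordConj w a * c + c * b) * ↑hd.unit⁻¹) * b =
      ((cliffordConj w a * c + c * b) * b) * ↑hd.unit⁻¹ := by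
    rw [mul_assoc, ← hbinv.eq, ← mul_assoc]
  rw [hswap, ← mul_assoc, ← add_mul, hkey, mul_assoc, Units.mul_inv, mul_one]
end

section
/- Let w : Fin 2 → ℝ with each w i equal to 1 or −1, let Q be the diagonal quadratic form on Fin 2 → ℝ with weights w, let A = CliffordAlgebra Q, and let conj : A → A denote Clifford conjugation (reversal composed with grade involution). Let a, b, c ∈ A and set d' := b^2 + (conj a)·a + b·(a + conj a). If d' is a unit of A, then x := ((conj a)·c + c·b)·d'⁻¹ (using the inverse of the unit d') satisfies the Sylvester equation a·x + x·b = c. -/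
open CliffordAlgebra QuaternionAlgebra
open scoped Quaternion

-- map commutes with star
theorem map_star' {R M₁ M₂ : Type*} [CommRing R] [AddCommGroup M₁] [AddCommGroup M₂]
    [Module R M₁] [Module R M₂] {Q₁ : QuadraticForm R M₁} {Q₂ : QuadraticForm R M₂}
    (f : Q₁ →qᵢ Q₂) (x : CliffordAlgebra Q₁) :
    CliffordAlgebra.map f (star x) = star (CliffordAlgebra.map f x) := by
  induction x using CliffordAlgebra.induction with
  | algebraMap r => simp [CliffordAlgebra.star_algebraMap]
  | ι m => simp [CliffordAlgebra.star_ι]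
  | mul x y hx hy => rw [star_mul, map_mul, map_mul, hx, hy, star_mul]
  | add x y hx hy => rw [star_add, map_add, map_add, hx, hy, star_add]

-- in the quaternion algebra, star q * q is scalar
theorem quat_star_mul_self {R : Type*} [CommRing R] (c₁ c₂ : R) (q : ℍ[R,c₁,c₂]) :
    star q * q = ((star q * q).re : ℍ[R,c₁,c₂]) := by
  ext <;> simp <;> ring

theorem quat_add_star {R : Type*} [CommRing R] (c₁ c₂ : R) (q : ℍ[R,c₁,c₂]) :
    q + star q = ((q.re + q.re : R) : ℍ[R,c₁,c₂]) := by
  ext <;> simp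

noncomputable def isomE (w : Fin 2 → ℝ) :
    (QuadraticMap.weightedSumSquares ℝ w).IsometryEquiv
      (CliffordAlgebraQuaternion.Q (w 0) (w 1)) where
  toLinearEquiv := LinearEquiv.finTwoArrow ℝ ℝ
  map_app' x := by
    simp [CliffordAlgebraQuaternion.Q_apply, QuadraticMap.weightedSumSquares_apply,
      Fin.sum_univ_two, LinearEquiv.finTwoArrow, smul_eq_mul]

theorem star_mul_self_scalar (w : Fin 2 → ℝ)
    (x : CliffordAlgebra (QuadraticMap.weightedSumSquares ℝ w)) :
    ∃ r : ℝ, star x * x = algebraMap ℝ _ r := by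
  set φ := CliffordAlgebra.equivOfIsometry (isomE w)
  set ψ := CliffordAlgebraQuaternion.toQuaternion (c₁ := w 0) (c₂ := w 1)
  refine ⟨(star (ψ (φ x)) * ψ (φ x)).re, ?_⟩
  have hinj : Function.Injective (fun y => ψ (φ y)) := fun u v huv =>
    φ.injective
      ((Function.LeftInverse.injective
        CliffordAlgebraQuaternion.ofQuaternion_toQuaternion) huv)
  apply hinj
  show ψ (φ (star x * x)) = ψ (φ (algebraMap ℝ _ _))
  have hφ : φ (star x) = star (φ x) := map_star' _ x
  rw [map_mul, map_mul, hφ, CliffordAlgebraQuaternion.toQuaternion_star,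
    quat_star_mul_self]
  rw [AlgEquiv.commutes, AlgHom.commutes]
  rfl

theorem add_star_self_scalar (w : Fin 2 → ℝ)
    (x : CliffordAlgebra (QuadraticMap.weightedSumSquares ℝ w)) :
    ∃ r : ℝ, x + star x = algebraMap ℝ _ r := by
  set φ := CliffordAlgebra.equivOfIsometry (isomE w)
  set ψ := CliffordAlgebraQuaternion.toQuaternion (c₁ := w 0) (c₂ := w 1)
  refine ⟨(ψ (φ x)).re + (ψ (φ x)).re, ?_⟩
  have hinj : Function.Injective (fun y => ψ (φ y)) := fun u v huv =>
    φ.injective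
      ((Function.LeftInverse.injective
        CliffordAlgebraQuaternion.ofQuaternion_toQuaternion) huv)
  apply hinj
  show ψ (φ (x + star x)) = ψ (φ (algebraMap ℝ _ _))
  have hφ : φ (star x) = star (φ x) := map_star' _ x
  rw [map_add, map_add, hφ, CliffordAlgebraQuaternion.toQuaternion_star,
    quat_add_star]
  rw [AlgEquiv.commutes, AlgHom.commutes]
  rfl

theorem clifford2_sylvester_right_solution (w : Fin 2 → ℝ)
    (hw : ∀ i, w i = 1 ∨ w i = -1)
    (a b c : CliffordAlgebra (QuadraticMap.weightedSumSquares ℝ w))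
    (hd : IsUnit (b ^ 2 + cliffordConj w a * a + b * (a + cliffordConj w a))) :
    a * ((cliffordConj w a * c + c * b) * ↑hd.unit⁻¹) +
      ((cliffordConj w a * c + c * b) * ↑hd.unit⁻¹) * b = c := by
  have hstar : cliffordConj w a = star a := rfl
  obtain ⟨n, hn⟩ := star_mul_self_scalar w a
  obtain ⟨s, hs⟩ := add_star_self_scalar w a
  set S := algebraMap ℝ (CliffordAlgebra (QuadraticMap.weightedSumSquares ℝ w)) s with hS
  set N := algebraMap ℝ (CliffordAlgebra (QuadraticMap.weightedSumSquares ℝ w)) n with hNdef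
  have hsa : star a = S - a := eq_sub_iff_add_eq'.2 hs
  have hN2 : a * (S - a) = N := by
    have : a * (S - a) = (S - a) * a := by
      have hc : a * S = S * a := (Algebra.commutes s a).symm
      rw [mul_sub, sub_mul, hc]
    rw [this, ← hsa, hn]
  have hcomm : Commute (b ^ 2 + cliffordConj w a * a + b * (a + cliffordConj w a)) b := by
    rw [hstar, hn, hs]
    exact (((Commute.refl b).pow_left 2).add_left (Algebra.commutes n b)).add_left
      (Commute.mul_left (Commute.refl b) (Algebra.commutes s b))
  have hu : (↑hd.unit⁻¹ : CliffordAlgebra (QuadraticMap.weightedSumSquares ℝ w)) * b = b * ↑hd.unit⁻¹ := by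
    have h1 : Commute (↑hd.unit : CliffordAlgebra (QuadraticMap.weightedSumSquares ℝ w)) b := by rw [IsUnit.unit_spec]; exact hcomm
    exact h1.units_inv_left
  set y := cliffordConj w a * c + c * b with hy_def
  have hy : a * y + y * b
      = c * (b ^ 2 + cliffordConj w a * a + b * (a + cliffordConj w a)) := by
    rw [hy_def, hstar, hn, hs, hsa]
    calc a * ((S - a) * c + c * b) + ((S - a) * c + c * b) * b
        = (a * (S - a)) * c + (a + (S - a)) * (c * b) + c * b ^ 2 := by noncomm_ring
      _ = N * c + S * (c * b) + c * b ^ 2 := by rw [hN2, add_sub_cancel]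
      _ = c * N + (c * b) * S + c * b ^ 2 := by
          rw [hS, hNdef, Algebra.commutes n c, Algebra.commutes s (c * b)]
      _ = c * (b ^ 2 + N + b * S) := by noncomm_ring
  calc a * (y * ↑hd.unit⁻¹) + (y * ↑hd.unit⁻¹) * b
      = a * y * ↑hd.unit⁻¹ + y * (↑hd.unit⁻¹ * b) := by noncomm_ring
    _ = (a * y + y * b) * ↑hd.unit⁻¹ := by rw [hu, ← mul_assoc]; noncomm_ring
    _ = c * (b ^ 2 + cliffordConj w a * a + b * (a + cliffordConj w a)) * ↑hd.unit⁻¹ := by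
        rw [hy]
    _ = c := by rw [mul_assoc, IsUnit.mul_val_inv, mul_one]
end
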